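/- Fix m ≥ 1 machines and a finite list of jobs with nonnegative sizes. If ℓ, ℓ' ∈ (ℝ≥0)^m are initial load vectors with ℓ_i ≤ ℓ'_i for every machine i, then the free time of the list schedule of this list started from initial loads ℓ is at most the free time of the list schedule of the same list started from initial loads ℓ'. In other words, entrywise increasing the initial loads weakly increases the free time of a list schedule. -/
import Mathlib


/-- The machine of minimum load, ties broken by lowest machine index. -/
noncomputable def bestMachine {m : ℕ} (hm : 0 < m) (ℓ : Fin m → ℝ) : Fin m :=
  (Finset.univ.filter fun i => ∀ j, ℓ i ≤ ℓ j).min' (by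
    obtain ⟨i, -, hi⟩ := Finset.exists_min_image Finset.univ ℓ ⟨⟨0, hm⟩, Finset.mem_univ _⟩
    exact ⟨i, Finset.mem_filter.mpr ⟨Finset.mem_univ _, fun j => hi j (Finset.mem_univ _)⟩⟩)

/-- One step of list scheduling: assign a job of size `s` to the best machine. -/
noncomputable def schedStep {m : ℕ} (hm : 0 < m) (ℓ : Fin m → ℝ) (s : ℝ) : Fin m → ℝ :=
  Function.update ℓ (bestMachine hm ℓ) (ℓ (bestMachine hm ℓ) + s)

/-- Machine loads after list-scheduling `jobs` starting from initial loads `ℓ`. -/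
noncomputable def loadsAfter {m : ℕ} (hm : 0 < m) (ℓ : Fin m → ℝ) : List ℝ → (Fin m → ℝ)
  | [] => ℓ
  | s :: rest => loadsAfter hm (schedStep hm ℓ s) rest

/-- The free time: minimum machine load after all jobs are assigned. -/
noncomputable def freeTime {m : ℕ} (hm : 0 < m) (ℓ : Fin m → ℝ) (jobs : List ℝ) : ℝ :=
  Finset.univ.inf' ⟨⟨0, hm⟩, Finset.mem_univ _⟩ (loadsAfter hm ℓ jobs)

/-- Total completion time of the list schedule. -/
noncomputable def totalCompletion {m : ℕ} (hm : 0 < m) (ℓ : Fin m → ℝ) : List ℝ → ℝ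
  | [] => 0
  | s :: rest => (ℓ (bestMachine hm ℓ) + s) + totalCompletion hm (schedStep hm ℓ s) rest

/-- The sequence of machines to which successive jobs are assigned. -/
noncomputable def assignSeq {m : ℕ} (hm : 0 < m) (ℓ : Fin m → ℝ) : List ℝ → List (Fin m)
  | [] => []
  | s :: rest => bestMachine hm ℓ :: assignSeq hm (schedStep hm ℓ s) rest

/-- The optimal free time of a multiset of jobs: min over orderings, zero initial loads. -/
noncomputable def optFreeTime {m : ℕ} (hm : 0 < m) (J : Multiset ℝ) : ℝ :=
  sInf {F | ∃ l : List ℝ, (l : Multiset ℝ) = J ∧ F = freeTime hm (fun _ => 0) l}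

/-- The optimal total completion time of a multiset of jobs: min over orderings. -/
noncomputable def optTotalCompletion {m : ℕ} (hm : 0 < m) (J : Multiset ℝ) : ℝ :=
  sInf {C | ∃ l : List ℝ, (l : Multiset ℝ) = J ∧ C = totalCompletion hm (fun _ => 0) l}

lemma bestMachine_le {m : ℕ} (hm : 0 < m) (ℓ : Fin m → ℝ) (j : Fin m) :
    ℓ (bestMachine hm ℓ) ≤ ℓ j := by
  have h : bestMachine hm ℓ ∈ Finset.univ.filter fun i => ∀ j, ℓ i ≤ ℓ j :=
    Finset.min'_mem _ _
  exact (Finset.mem_filter.mp h).2 j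

lemma step_mono {m : ℕ} (hm : 0 < m) (ℓ ℓ' : Fin m → ℝ) (s : ℝ)
    (σ : Equiv.Perm (Fin m)) (h : ∀ i, ℓ i ≤ ℓ' (σ i)) :
    ∃ σ' : Equiv.Perm (Fin m), ∀ i, schedStep hm ℓ s i ≤ schedStep hm ℓ' s (σ' i) := by
  set i₀ := bestMachine hm ℓ with hi₀
  set j₀ := bestMachine hm ℓ' with hj₀
  refine ⟨σ * Equiv.swap i₀ (σ.symm j₀), fun i => ?_⟩
  simp only [Equiv.Perm.mul_apply, schedStep, ← hi₀, ← hj₀]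
  by_cases hi : i = i₀
  · subst hi
    rw [Equiv.swap_apply_left, Equiv.apply_symm_apply,
        Function.update_self, Function.update_self]
    have h1 := bestMachine_le hm ℓ (σ.symm j₀)
    have h2 := h (σ.symm j₀)
    rw [Equiv.apply_symm_apply] at h2
    linarith
  · rw [Function.update_of_ne hi]
    by_cases hj : i = σ.symm j₀
    · subst hj
      rw [Equiv.swap_apply_right]
      have hne : σ i₀ ≠ j₀ := by
        intro hc
        exact hi (by rw [← hc, Equiv.symm_apply_apply])
      rw [Function.update_of_ne hne]
      have h2 := h (σ.symm j₀)
      rw [Equiv.apply_symm_apply] at h2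
      have h3 := bestMachine_le hm ℓ' (σ i₀)
      rw [← hj₀] at h3
      linarith
    · rw [Equiv.swap_apply_of_ne_of_ne hi hj]
      have hne : σ i ≠ j₀ := by
        intro hc
        exact hj (by rw [← hc, Equiv.symm_apply_apply])
      rw [Function.update_of_ne hne]
      exact h i

lemma loadsAfter_mono {m : ℕ} (hm : 0 < m) (jobs : List ℝ) :
    ∀ (ℓ ℓ' : Fin m → ℝ) (σ : Equiv.Perm (Fin m)), (∀ i, ℓ i ≤ ℓ' (σ i)) →
    ∃ σ' : Equiv.Perm (Fin m), ∀ i, loadsAfter hm ℓ jobs i ≤ loadsAfter hm ℓ' jobs (σ' i) := by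
  induction jobs with
  | nil => exact fun ℓ ℓ' σ h => ⟨σ, h⟩
  | cons s rest ih =>
      intro ℓ ℓ' σ h
      obtain ⟨σ', h'⟩ := step_mono hm ℓ ℓ' s σ h
      exact ih _ _ σ' h'

/-- entrywise increasing the initial loads weakly increases the
free time of a list schedule. -/
theorem stmt2 (m : ℕ) (hm : 0 < m) (jobs : List ℝ) (hjobs : ∀ s ∈ jobs, 0 ≤ s)
    (ℓ ℓ' : Fin m → ℝ) (hℓ : ∀ i, 0 ≤ ℓ i) (hle : ∀ i, ℓ i ≤ ℓ' i) :
    freeTime hm ℓ jobs ≤ freeTime hm ℓ' jobs := by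
  obtain ⟨σ, hσ⟩ := loadsAfter_mono hm jobs ℓ ℓ' (Equiv.refl _) hle
  unfold freeTime
  apply Finset.le_inf'
  intro j _
  calc Finset.univ.inf' ⟨⟨0, hm⟩, Finset.mem_univ _⟩ (loadsAfter hm ℓ jobs)
      ≤ loadsAfter hm ℓ jobs (σ.symm j) := Finset.inf'_le _ (Finset.mem_univ _)
    _ ≤ loadsAfter hm ℓ' jobs (σ (σ.symm j)) := hσ _
    _ = loadsAfter hm ℓ' jobs j := by rw [Equiv.apply_symm_apply]
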